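/- Let (X_1, Z_1, Y_1), ..., (X_n, Z_n, Y_n) be generated by a sequential adaptive sampling procedure where, for each t, (X_t, Z_t) is drawn from a conditional law f_t^A given the history (X_{1:t-1}, Z_{1:t-1}, Y_{1:t-1}) and Y_t is drawn from f_Q(X_t, Z_t). Suppose (null hypothesis) f_Q(x, z) does not depend on x, and suppose the marginal conditional law of Z_t given the history does not depend on X_{1:t-1}. Let tilde{X}_1, ..., tilde{X}_n be resampled sequentially, with tilde{X}_t drawn from the conditional law of X_t given (X_{1:t-1} = tilde{X}_{1:t-1}, Z_{1:t}, Y_{1:t-1}). Then (tilde{X}_{1:n}, Y_{1:n}, Z_{1:n}) has the same joint distribution as (X_{1:n}, Y_{1:n}, Z_{1:n}). -/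
import Mathlib


open Finset

/-- **Theorem 1, distributional equality.** In the discrete sequential adaptive
sampling procedure, where at each time `t` the covariate `Z_t` is drawn from `h_t` (not
depending on past `X`'s, Assumption 1), `X_t` is drawn from `g_t` given the history and the
current `Z_t`, and `Y_t` is drawn from `f_Q(X_t, Z_t)` which under the null does not depend on
its first argument, the resampled vector `tilde X` obtained by the natural adaptive resampling
procedure satisfies `(tilde X_{1:n}, Y_{1:n}, Z_{1:n}) =d (X_{1:n}, Y_{1:n}, Z_{1:n})`:
the joint pmf `Ptil` of the former equals the joint pmf `P` of the latter. -/
theorem adaptive_resampling_distributional_equality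
    {𝒳 𝒵 𝒴 : Type*} [Fintype 𝒳] [Fintype 𝒵] [Fintype 𝒴] [DecidableEq 𝒳]
    (n : ℕ)
    -- `g t x z y` : conditional pmf value P(X_t = x t | X_{<t} = x_{<t}, Z_{≤t} = z_{≤t}, Y_{<t} = y_{<t})
    (g : Fin n → (Fin n → 𝒳) → (Fin n → 𝒵) → (Fin n → 𝒴) → ℝ)
    -- `h t x z y` : conditional pmf value P(Z_t = z t | X_{<t}, Z_{<t}, Y_{<t})
    (h : Fin n → (Fin n → 𝒳) → (Fin n → 𝒵) → (Fin n → 𝒴) → ℝ)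
    -- `fQ x z y` : pmf value P(Y_t = y | X_t = x, Z_t = z)
    (fQ : 𝒳 → 𝒵 → 𝒴 → ℝ)
    -- dependence structure: `g t` depends only on `x_{≤t}`, `z_{≤t}`, `y_{<t}`
    (hgdep : ∀ t x x' z z' y y', (∀ s, s ≤ t → x s = x' s) → (∀ s, s ≤ t → z s = z' s) →
      (∀ s, s < t → y s = y' s) → g t x z y = g t x' z' y')
    -- dependence structure: `h t` depends only on `x_{<t}`, `z_{≤t}`, `y_{<t}`
    (hhdep : ∀ t x x' z z' y y', (∀ s, s < t → x s = x' s) → (∀ s, s ≤ t → z s = z' s) →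
      (∀ s, s < t → y s = y' s) → h t x z y = h t x' z' y')
    -- Assumption 1: the conditional law of `Z_t` does not depend on the past `X`'s at all
    (hnoadapt : ∀ t x x' z y, h t x z y = h t x' z y)
    -- the null hypothesis: `f_Q(x, z)` does not depend on `x`
    (hnull : ∀ x x' z y, fQ x z y = fQ x' z y)
    -- nonnegativity and normalization of the conditional pmfs of `X_t`
    (hgpos : ∀ t x z y, 0 ≤ g t x z y)
    (hgsum : ∀ t x z y, ∑ a : 𝒳, g t (Function.update x t a) z y = 1)
    -- joint pmf of the adaptively collected data `(X_{1:n}, Z_{1:n}, Y_{1:n})`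
    (P : (Fin n → 𝒳) → (Fin n → 𝒵) → (Fin n → 𝒴) → ℝ)
    (hP : ∀ x z y, P x z y = ∏ t, (h t x z y * g t x z y * fQ (x t) (z t) (y t)))
    -- joint pmf of `(tilde X_{1:n}, Z_{1:n}, Y_{1:n})` under the natural adaptive resampling
    (Ptil : (Fin n → 𝒳) → (Fin n → 𝒵) → (Fin n → 𝒴) → ℝ)
    (hPtil : ∀ xt z y, Ptil xt z y = (∑ x : Fin n → 𝒳, P x z y) * ∏ t, g t xt z y) :
    ∀ xt z y, Ptil xt z y = P xt z y := by

  intro xt z y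
  -- Key marginalization lemma: summing the product of the g's over suffixes gives
  -- the product over the prefix.
  have key : ∀ k m, m + k = n → ∀ x : Fin n → 𝒳,
      (∑ x' ∈ Finset.univ.filter
          (fun x' : Fin n → 𝒳 => ∀ s : Fin n, (s : ℕ) < m → x' s = x s),
        ∏ t, g t x' z y)
      = ∏ t ∈ Finset.univ.filter (fun t : Fin n => (t : ℕ) < m), g t x z y := by
    intro k
    induction k with
    | zero =>
      intro m hm x
      have hmn : m = n := by omega
      subst hmn
      have h1 : (Finset.univ.filter
          (fun x' : Fin m → 𝒳 => ∀ s : Fin m, (s : ℕ) < m → x' s = x s)) = {x} := by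
        ext x'
        simp only [Finset.mem_filter, Finset.mem_univ, true_and, Finset.mem_singleton]
        constructor
        · intro hx'; funext s; exact hx' s s.isLt
        · intro hx'; subst hx'; intro s _; rfl
      have h2 : (Finset.univ.filter (fun t : Fin m => (t : ℕ) < m)) = Finset.univ := by
        ext t; simp [t.isLt]
      rw [h1, h2, Finset.sum_singleton]
    | succ k ih =>
      intro m hm x
      have hmn : m < n := by omega
      set M : Fin n := ⟨m, hmn⟩ with hM
      -- fiberwise decomposition over the value at coordinate M
      rw [← Finset.sum_fiberwise (Finset.univ.filter
          (fun x' : Fin n → 𝒳 => ∀ s : Fin n, (s : ℕ) < m → x' s = x s))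
          (fun x' => x' M) (fun x' => ∏ t, g t x' z y)]
      have hfiber : ∀ a : 𝒳,
          ((Finset.univ.filter
            (fun x' : Fin n → 𝒳 => ∀ s : Fin n, (s : ℕ) < m → x' s = x s)).filter
              (fun x' => x' M = a))
          = Finset.univ.filter
            (fun x' : Fin n → 𝒳 => ∀ s : Fin n, (s : ℕ) < m + 1 →
              x' s = Function.update x M a s) := by
        intro a
        ext x'
        simp only [Finset.mem_filter, Finset.mem_univ, true_and]
        constructor
        · rintro ⟨h1, h2⟩ s hs
          rcases Nat.lt_succ_iff_lt_or_eq.mp hs with hlt | heq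
          · have hne : s ≠ M := by
              intro hc; rw [hc] at hlt; exact absurd hlt (lt_irrefl m)
            rw [Function.update_of_ne hne]
            exact h1 s hlt
          · have hsM : s = M := Fin.ext heq
            subst hsM
            rw [Function.update_self]
            exact h2
        · intro h1
          constructor
          · intro s hs
            have hne : s ≠ M := by
              intro hc
              have : (s : ℕ) = m := by rw [hc]
              omega
            have := h1 s (by omega)
            rwa [Function.update_of_ne hne] at this
          · have := h1 M (by simp [hM])
            rwa [Function.update_self] at this
      have hprodsplit : ∀ a : 𝒳,
          (Finset.univ.filter (fun t : Fin n => (t : ℕ) < m + 1))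
          = insert M (Finset.univ.filter (fun t : Fin n => (t : ℕ) < m)) := by
        intro a
        ext t
        simp only [Finset.mem_filter, Finset.mem_univ, true_and, Finset.mem_insert]
        constructor
        · intro ht
          rcases Nat.lt_succ_iff_lt_or_eq.mp ht with hlt | heq
          · exact Or.inr hlt
          · exact Or.inl (Fin.ext heq)
        · rintro (hc | hc)
          · subst hc; simp [hM]
          · omega
      have hMnot : M ∉ Finset.univ.filter (fun t : Fin n => (t : ℕ) < m) := by
        simp [hM]
      calc
        (∑ a : 𝒳, ∑ x' ∈ (Finset.univ.filter
            (fun x' : Fin n → 𝒳 => ∀ s : Fin n, (s : ℕ) < m → x' s = x s)).filter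
              (fun x' => x' M = a), ∏ t, g t x' z y)
            = ∑ a : 𝒳, (g M (Function.update x M a) z y *
                ∏ t ∈ Finset.univ.filter (fun t : Fin n => (t : ℕ) < m),
                  g t (Function.update x M a) z y) := by
              refine Finset.sum_congr rfl (fun a _ => ?_)
              rw [hfiber a, ih (m + 1) (by omega) (Function.update x M a),
                hprodsplit a, Finset.prod_insert hMnot]
        _ = ∑ a : 𝒳, (g M (Function.update x M a) z y *
                ∏ t ∈ Finset.univ.filter (fun t : Fin n => (t : ℕ) < m), g t x z y) := by
              refine Finset.sum_congr rfl (fun a _ => ?_)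
              congr 1
              refine Finset.prod_congr rfl (fun t ht => ?_)
              simp only [Finset.mem_filter, Finset.mem_univ, true_and] at ht
              refine hgdep t (Function.update x M a) x z z y y ?_ (fun _ _ => rfl)
                (fun _ _ => rfl)
              intro s hs
              have hne : s ≠ M := by
                intro hc
                have hsl : (s : ℕ) ≤ (t : ℕ) := hs
                have : (s : ℕ) = m := by rw [hc]
                omega
              rw [Function.update_of_ne hne]
        _ = (∑ a : 𝒳, g M (Function.update x M a) z y) *
              ∏ t ∈ Finset.univ.filter (fun t : Fin n => (t : ℕ) < m), g t x z y := by
              rw [Finset.sum_mul]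
        _ = ∏ t ∈ Finset.univ.filter (fun t : Fin n => (t : ℕ) < m), g t x z y := by
              rw [hgsum M x z y, one_mul]
  -- total mass of the product of the g's is 1
  have hsum1 : (∑ x : Fin n → 𝒳, ∏ t, g t x z y) = 1 := by
    have h0 := key n 0 (by omega) xt
    have hfilt : (Finset.univ.filter
        (fun x' : Fin n → 𝒳 => ∀ s : Fin n, (s : ℕ) < 0 → x' s = xt s)) = Finset.univ := by
      ext x'; simp
    have hfilt2 : (Finset.univ.filter (fun t : Fin n => (t : ℕ) < 0)) = (∅ : Finset (Fin n)) := by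
      ext t; simp
    rw [hfilt, hfilt2, Finset.prod_empty] at h0
    exact h0
  -- factorization of P
  have hPfac : ∀ x : Fin n → 𝒳, P x z y =
      (∏ t, (h t xt z y * fQ (xt t) (z t) (y t))) * ∏ t, g t x z y := by
    intro x
    rw [hP, ← Finset.prod_mul_distrib]
    refine Finset.prod_congr rfl (fun t _ => ?_)
    rw [hnoadapt t x xt z y, hnull (x t) (xt t) (z t) (y t)]
    ring
  have hsumP : (∑ x : Fin n → 𝒳, P x z y)
      = ∏ t, (h t xt z y * fQ (xt t) (z t) (y t)) := by
    calc (∑ x : Fin n → 𝒳, P x z y)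
        = ∑ x : Fin n → 𝒳, (∏ t, (h t xt z y * fQ (xt t) (z t) (y t))) * ∏ t, g t x z y := by
          exact Finset.sum_congr rfl (fun x _ => hPfac x)
      _ = (∏ t, (h t xt z y * fQ (xt t) (z t) (y t))) * ∑ x : Fin n → 𝒳, ∏ t, g t x z y := by
          rw [Finset.mul_sum]
      _ = ∏ t, (h t xt z y * fQ (xt t) (z t) (y t)) := by rw [hsum1, mul_one]
  rw [hPtil, hsumP, hPfac xt]
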